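/- arXiv:2402.03249 — 3 statements merged into one kernel-verified Lean document; each statement's English description precedes it below -/
import Mathlib

section
/- Let G = (V,E) be a finite simple graph, β > 0, and let X = (X_i)_{i∈V} ∈ {−1,1}^V be distributed according to the Ising measure P(x) ∝ exp(β Σ_{(i,j)∈E} x_i x_j). Then for every edge (i,j) ∈ E, Cov(X_i, X_j) ≥ (1 − e^{−2β})/2. -/
open MeasureTheory ProbabilityTheory Filter Topology Matrix

noncomputable section

/-- The `±1` configuration associated to a boolean configuration. -/
def pmVec {ι : Type*} (s : ι → Bool) : ι → ℝ := fun i => if s i then 1 else -1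

/-- Unnormalized Ising weight `exp((β/2) zᵀ Q z)`. -/
def isingWeight {ι : Type*} [Fintype ι] (β : ℝ) (Q : Matrix ι ι ℝ) (z : ι → ℝ) : ℝ :=
  Real.exp (β / 2 * (z ⬝ᵥ Q.mulVec z))

/-- Ising partition function `Z(β,Q)`. -/
def isingZ (ι : Type*) [Fintype ι] [DecidableEq ι] (β : ℝ) (Q : Matrix ι ι ℝ) : ℝ :=
  ∑ s : ι → Bool, isingWeight β Q (pmVec s)

/-- The Ising probability measure `P_{β,Q}` on `{±1}^ι ⊆ ℝ^ι`:
`P(z) = exp((β/2) zᵀQz) / Z(β,Q)`. -/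
def isingMeasure (ι : Type*) [Fintype ι] [DecidableEq ι] (β : ℝ) (Q : Matrix ι ι ℝ) :
    Measure (ι → ℝ) :=
  ∑ s : ι → Bool,
    ENNReal.ofReal (isingWeight β Q (pmVec s) / isingZ ι β Q) • Measure.dirac (pmVec s)

/-- Covariance of the coordinates `z i` and `z j` under a law `μ` on `ι → ℝ`. -/
def coordCov {ι : Type*} (μ : MeasureTheory.Measure (ι → ℝ)) (i j : ι) : ℝ :=
  (∫ z, z i * z j ∂μ) - (∫ z, z i ∂μ) * (∫ z, z j ∂μ)

section Aux

variable {V : Type*} [Fintype V] [DecidableEq V]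

lemma pmVec_cases (s : V → Bool) (v : V) : pmVec s v = 1 ∨ pmVec s v = -1 := by
  unfold pmVec; split <;> simp

lemma sum_pi_bool (f : V → Bool → ℝ) :
    ∑ s : V → Bool, ∏ v, f v (s v) = ∏ v, (f v true + f v false) := by
  rw [show (∏ v, (f v true + f v false)) = ∏ v, ∑ b : Bool, f v b by
    simp [Fintype.sum_bool, add_comm]]
  rw [Fintype.prod_sum f]

lemma monomial_nonneg (d : V → ℕ) :
    0 ≤ ∑ s : V → Bool, ∏ v, (pmVec s v) ^ (d v) := by
  have h : ∑ s : V → Bool, ∏ v, (pmVec s v) ^ (d v)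
      = ∏ v, ((1:ℝ) ^ (d v) + (-1:ℝ) ^ (d v)) := by
    have key := sum_pi_bool (fun v (b : Bool) => ((if b then (1:ℝ) else -1)) ^ (d v))
    simp only [if_true, Bool.false_eq_true, if_false] at key
    simp only [pmVec]
    convert key using 2
  rw [h]
  apply Finset.prod_nonneg
  intro v _
  rcases Nat.even_or_odd (d v) with he | ho
  · rw [he.neg_one_pow, one_pow]; norm_num
  · rw [ho.neg_one_pow, one_pow]; norm_num

lemma prod_pow_ite (z : V → ℝ) (a : V) :
    (∏ v, z v ^ (if a = v then 1 else 0)) = z a := by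
  have : (∏ v, z v ^ (if a = v then 1 else 0)) = ∏ v, (if a = v then z v else 1) := by
    apply Finset.prod_congr rfl; intro v _; split <;> simp
  rw [this, Finset.prod_ite_eq]
  simp

lemma monomial_eq (s : V → Bool) (F : Finset (V × V)) (i j : V) :
    pmVec s i * pmVec s j * ∏ p ∈ F, (pmVec s p.1 * pmVec s p.2)
      = ∏ v, (pmVec s v) ^ ((if i = v then 1 else 0) + (if j = v then 1 else 0)
          + ∑ p ∈ F, ((if p.1 = v then 1 else 0) + (if p.2 = v then 1 else 0))) := by
  simp only [pow_add, Finset.prod_mul_distrib, prod_pow_ite]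
  congr 1
  rw [show (∏ v, pmVec s v ^ ((∑ p ∈ F, ((if p.1 = v then 1 else 0) + (if p.2 = v then 1 else 0) : ℕ))))
      = ∏ v, ∏ p ∈ F, pmVec s v ^ ((if p.1 = v then 1 else 0) + (if p.2 = v then 1 else 0) : ℕ) from
    Finset.prod_congr rfl (fun v _ => (Finset.prod_pow_eq_pow_sum F _ _).symm)]
  rw [Finset.prod_comm, ← Finset.prod_mul_distrib]
  apply Finset.prod_congr rfl
  intro p _
  simp only [pow_add]
  rw [Finset.prod_mul_distrib, prod_pow_ite, prod_pow_ite]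

lemma griffiths_one (c t : ℝ) (hc : 0 ≤ c) (ht : 0 ≤ t) (P : Finset (V × V)) (i j : V) :
    0 ≤ ∑ s : V → Bool,
        (pmVec s i * pmVec s j) * ∏ p ∈ P, (t * (pmVec s p.1 * pmVec s p.2) + c) := by
  have expand : ∀ s : V → Bool,
      (pmVec s i * pmVec s j) * ∏ p ∈ P, (t * (pmVec s p.1 * pmVec s p.2) + c)
      = ∑ F ∈ P.powerset, (t ^ F.card * c ^ (P \ F).card) *
          (pmVec s i * pmVec s j * ∏ p ∈ F, (pmVec s p.1 * pmVec s p.2)) := by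
    intro s
    rw [Finset.prod_add, Finset.mul_sum]
    apply Finset.sum_congr rfl
    intro F _
    rw [Finset.prod_mul_distrib, Finset.prod_const, Finset.prod_const]
    ring
  rw [Finset.sum_congr rfl (fun s _ => expand s), Finset.sum_comm]
  apply Finset.sum_nonneg
  intro F _
  rw [← Finset.mul_sum]
  apply mul_nonneg (mul_nonneg (pow_nonneg ht _) (pow_nonneg hc _))
  rw [Finset.sum_congr rfl (fun s _ => monomial_eq s F i j)]
  exact monomial_nonneg _

lemma sum_flip (f : (V → Bool) → ℝ) :
    ∑ s : V → Bool, f s = ∑ s : V → Bool, f (fun v => !(s v)) :=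
  (Fintype.sum_bijective (fun s : V → Bool => fun v => !(s v))
    (Function.Involutive.bijective (fun s => by funext v; simp)) _ _ (fun s => rfl)).symm

lemma pmVec_flip (s : V → Bool) : pmVec (fun v => !(s v)) = fun v => -pmVec s v := by
  funext v; unfold pmVec; cases h : s v <;> simp [h]

lemma quadform_eq (G : SimpleGraph V) [DecidableRel G.Adj] (z : V → ℝ) :
    z ⬝ᵥ (G.adjMatrix ℝ).mulVec z
      = ∑ p ∈ Finset.univ.filter (fun p : V × V => G.Adj p.1 p.2), z p.1 * z p.2 := by
  rw [Finset.sum_filter, ← Finset.univ_product_univ, Finset.sum_product]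
  simp only [dotProduct, Matrix.mulVec, SimpleGraph.adjMatrix_apply, Finset.mul_sum,
    mul_ite, ite_mul, mul_zero, zero_mul, mul_one, one_mul]

lemma exp_pm (c x : ℝ) (hx : x = 1 ∨ x = -1) :
    Real.exp (c * x) = Real.sinh c * x + Real.cosh c := by
  rcases hx with h | h <;> subst h <;> rw [Real.sinh_eq, Real.cosh_eq] <;> ring_nf <;>
    simp [Real.exp_neg] <;> ring

lemma pm_mul_cases (s : V → Bool) (p q : V) :
    pmVec s p * pmVec s q = 1 ∨ pmVec s p * pmVec s q = -1 := by
  rcases pmVec_cases s p with h1 | h1 <;> rcases pmVec_cases s q with h2 | h2 <;>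
    rw [h1, h2] <;> norm_num

lemma weight_eq (G : SimpleGraph V) [DecidableRel G.Adj] (β : ℝ) (i j : V) (hij : G.Adj i j)
    (s : V → Bool) :
    isingWeight β (G.adjMatrix ℝ) (pmVec s)
      = Real.exp (β * (pmVec s i * pmVec s j)) *
        ∏ p ∈ (((Finset.univ.filter fun p : V × V => G.Adj p.1 p.2).erase (i, j)).erase (j, i)),
          (Real.sinh (β / 2) * (pmVec s p.1 * pmVec s p.2) + Real.cosh (β / 2)) := by
  have hne : i ≠ j := hij.ne
  have hQ : ((i, j) : V × V) ∈ Finset.univ.filter fun p : V × V => G.Adj p.1 p.2 := by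
    simp [hij]
  have hQ' : ((j, i) : V × V) ∈
      (Finset.univ.filter fun p : V × V => G.Adj p.1 p.2).erase (i, j) := by
    simp [hij.symm, Prod.ext_iff, hne, hne.symm]
  unfold isingWeight
  rw [quadform_eq, ← Finset.sum_erase_add _ _ hQ, ← Finset.sum_erase_add _ _ hQ',
    mul_add, mul_add, Real.exp_add, Real.exp_add, Finset.mul_sum, Real.exp_sum,
    Finset.prod_congr rfl (fun p _ => exp_pm (β / 2) _ (pm_mul_cases s p.1 p.2))]
  have h2 : Real.exp (β / 2 * (pmVec s (j, i).1 * pmVec s (j, i).2)) *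
      Real.exp (β / 2 * (pmVec s (i, j).1 * pmVec s (i, j).2))
      = Real.exp (β * (pmVec s i * pmVec s j)) := by
    rw [← Real.exp_add]
    congr 1
    show β / 2 * (pmVec s j * pmVec s i) + β / 2 * (pmVec s i * pmVec s j) = _
    ring
  rw [mul_assoc, h2, mul_comm]

lemma isingWeight_pos (β : ℝ) (Q : Matrix V V ℝ) (z : V → ℝ) : 0 < isingWeight β Q z :=
  Real.exp_pos _

lemma isingZ_pos (β : ℝ) (Q : Matrix V V ℝ) : 0 < isingZ V β Q :=
  Finset.sum_pos (fun s _ => isingWeight_pos β Q (pmVec s)) Finset.univ_nonempty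

lemma integrable_dirac'' {f : (V → ℝ) → ℝ} (hf : Continuous f) (a : V → ℝ) :
    Integrable f (Measure.dirac a) := by
  refine ⟨hf.aestronglyMeasurable, ?_⟩
  have : (∫⁻ x, ‖f x‖₊ ∂Measure.dirac a) = ‖f a‖₊ :=
    MeasureTheory.lintegral_dirac' a hf.measurable.nnnorm.coe_nnreal_ennreal
  simp only [HasFiniteIntegral, this]
  rw [MeasureTheory.lintegral_dirac' a hf.measurable.enorm]
  exact enorm_lt_top

lemma integral_ising (β : ℝ) (Q : Matrix V V ℝ) (f : (V → ℝ) → ℝ) (hf : Continuous f) :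
    ∫ z, f z ∂(isingMeasure V β Q)
      = ∑ s : V → Bool, (isingWeight β Q (pmVec s) / isingZ V β Q) * f (pmVec s) := by
  unfold isingMeasure
  rw [MeasureTheory.integral_finset_sum_measure (fun s _ =>
    (integrable_dirac'' hf (pmVec s)).smul_measure ENNReal.ofReal_ne_top)]
  apply Finset.sum_congr rfl
  intro s _
  rw [integral_smul_measure, integral_dirac' f _ hf.stronglyMeasurable,
    ENNReal.toReal_ofReal (div_nonneg (isingWeight_pos β Q (pmVec s)).le (isingZ_pos β Q).le)]
  simp [smul_eq_mul]

end Aux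

/-- **(Edge covariance lower bound).** For the Ising measure on a finite simple graph `G`
at inverse temperature `β > 0` (i.e. `P(x) ∝ exp(β Σ_{(i,j)∈E} xᵢxⱼ)`, which is `P_{β,A}` for
`A` the adjacency matrix), every edge `(i,j)` satisfies `Cov(Xᵢ, Xⱼ) ≥ (1 - e^{-2β})/2`. -/
theorem ising_edge_covariance_lower_bound {V : Type*} [Fintype V] [DecidableEq V]
    (G : SimpleGraph V) [DecidableRel G.Adj] (β : ℝ) (hβ : 0 < β)
    (i j : V) (hij : G.Adj i j) :
    (1 - Real.exp (-2 * β)) / 2 ≤ coordCov (isingMeasure V β (G.adjMatrix ℝ)) i j := by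
  classical
  set A : Matrix V V ℝ := G.adjMatrix ℝ with hA
  set W : (V → Bool) → ℝ := fun s => isingWeight β A (pmVec s) with hWdef
  set Z : ℝ := isingZ V β A with hZdef
  have hZ : 0 < Z := isingZ_pos β A
  -- single-coordinate expectations vanish by spin-flip symmetry
  have hWflip : ∀ s : V → Bool, W (fun v => !(s v)) = W s := by
    intro s
    show isingWeight β A (pmVec fun v => !(s v)) = isingWeight β A (pmVec s)
    rw [pmVec_flip]
    show isingWeight β A (-(pmVec s)) = isingWeight β A (pmVec s)
    unfold isingWeight
    rw [Matrix.mulVec_neg, dotProduct_neg, neg_dotProduct, neg_neg]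
  have hsym : ∀ k : V, (∑ s : V → Bool, (W s / Z) * pmVec s k) = 0 := by
    intro k
    have h0 := sum_flip (fun s : V → Bool => (W s / Z) * pmVec s k)
    have h1 : ∀ s : V → Bool, (W (fun v => !(s v)) / Z) * pmVec (fun v => !(s v)) k
        = -((W s / Z) * pmVec s k) := by
      intro s
      rw [hWflip s, pmVec_flip]
      ring
    rw [Finset.sum_congr rfl (fun s _ => h1 s), Finset.sum_neg_distrib] at h0
    linarith
  -- compute the covariance as a sum
  have hij' : Continuous fun z : V → ℝ => z i * z j := (continuous_apply i).mul (continuous_apply j)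
  have hcov : coordCov (isingMeasure V β A) i j
      = ∑ s : V → Bool, (W s / Z) * (pmVec s i * pmVec s j) := by
    unfold coordCov
    rw [integral_ising β A _ hij', integral_ising β A _ (continuous_apply i),
      integral_ising β A _ (continuous_apply j)]
    rw [hsym i, hsym j]
    ring
  rw [hcov]
  have hsumdiv : (∑ s : V → Bool, (W s / Z) * (pmVec s i * pmVec s j))
      = (∑ s : V → Bool, W s * (pmVec s i * pmVec s j)) / Z := by
    rw [Finset.sum_div]
    exact Finset.sum_congr rfl fun s _ => by ring
  rw [hsumdiv, le_div_iff₀ hZ]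
  -- the core inequality
  set r : ℝ := Real.exp (-2 * β) with hrdef
  set q : ℝ := Real.exp β with hqdef
  set q' : ℝ := Real.exp (-β) with hq'def
  have hqq' : q * q' = 1 := by rw [hqdef, hq'def, ← Real.exp_add]; simp
  have hr : r = q' * q' := by rw [hrdef, hq'def, ← Real.exp_add]; ring_nf
  have hq1 : 1 ≤ q := Real.one_le_exp hβ.le
  have hq'0 : 0 < q' := Real.exp_pos _
  have hr0 : 0 < r := Real.exp_pos _
  set c : ℝ := Real.cosh (β / 2) with hcdef
  set t : ℝ := Real.sinh (β / 2) with htdef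
  have hc0 : 0 ≤ c := (Real.cosh_pos _).le
  have ht0 : 0 ≤ t := by rw [htdef]; exact Real.sinh_nonneg_iff.mpr (by linarith)
  set P : Finset (V × V) :=
    ((Finset.univ.filter fun p : V × V => G.Adj p.1 p.2).erase (i, j)).erase (j, i) with hPdef
  set W' : (V → Bool) → ℝ := fun s => ∏ p ∈ P, (t * (pmVec s p.1 * pmVec s p.2) + c)
    with hW'def
  have hWeq : ∀ s : V → Bool, W s = Real.exp (β * (pmVec s i * pmVec s j)) * W' s := by
    intro s
    show isingWeight β A (pmVec s) = _ * W' s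
    rw [hA, weight_eq G β i j hij s]
  have hW'0 : ∀ s : V → Bool, 0 ≤ W' s := by
    intro s
    apply Finset.prod_nonneg
    intro p _
    rcases pm_mul_cases s p.1 p.2 with h | h <;> rw [h]
    · linarith
    · have : c - t = Real.exp (-(β / 2)) := Real.cosh_sub_sinh (β / 2) ▸ rfl
      nlinarith [Real.exp_pos (-(β / 2))]
  set α : ℝ := q * (1 - (1 - r) / 2) with hαdef
  set γ : ℝ := (1 + (1 - r) / 2) * q' with hγdef
  have hαγ : 0 ≤ α - γ := by
    nlinarith [sq_nonneg (1 - q' * q'), sq_nonneg q', hq'0.le]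
  have hαγ' : 0 ≤ α + γ := by nlinarith [hr0.le, hq'0.le]
  have hpoint : ∀ s : V → Bool,
      W s * (pmVec s i * pmVec s j) - (1 - r) / 2 * W s
      = ((α - γ) / 2) * W' s + ((α + γ) / 2) * ((pmVec s i * pmVec s j) * W' s) := by
    intro s
    rw [hWeq s]
    rcases pm_mul_cases s i j with h | h <;> rw [h]
    · have hq2 : Real.exp (β * 1) = q := by rw [mul_one, hqdef]
      rw [hq2, hαdef, hγdef]
      ring
    · have hq2 : Real.exp (β * (-1 : ℝ)) = q' := by rw [hq'def]; congr 1; ring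
      rw [hq2, hαdef, hγdef]
      ring
  have hgrif : 0 ≤ ∑ s : V → Bool, (pmVec s i * pmVec s j) * W' s :=
    griffiths_one c t hc0 ht0 P i j
  have hsum : (∑ s : V → Bool, W s * (pmVec s i * pmVec s j)) - (1 - r) / 2 * Z
      = ((α - γ) / 2) * (∑ s : V → Bool, W' s)
        + ((α + γ) / 2) * (∑ s : V → Bool, (pmVec s i * pmVec s j) * W' s) := by
    rw [hZdef]
    show _ = _
    rw [show (isingZ V β A) = ∑ s : V → Bool, W s from rfl]
    rw [Finset.mul_sum, ← Finset.sum_sub_distrib,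
      Finset.sum_congr rfl (fun s _ => hpoint s), Finset.sum_add_distrib,
      ← Finset.mul_sum, ← Finset.mul_sum]
  have hW'sum : 0 ≤ ∑ s : V → Bool, W' s := Finset.sum_nonneg fun s _ => hW'0 s
  nlinarith [mul_nonneg (by linarith : (0:ℝ) ≤ (α - γ) / 2) hW'sum,
    mul_nonneg (by linarith : (0:ℝ) ≤ (α + γ) / 2) hgrif]

end
end

section
/- For each n let A_n be an n×n symmetric positive semidefinite matrix with eigenvalues λ_1 ≥ λ_2 ≥ … ≥ λ_n ≥ 0, Tr(A_n) > 0, and λ_1 / Σ_{i=1}^n λ_i → 0 as n → ∞. If Z ~ N(0, I_n), then ZᵀA_nZ / E[ZᵀA_nZ] = ZᵀA_nZ / Tr(A_n) converges to 1 in probability. -/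
open MeasureTheory ProbabilityTheory Filter Topology Matrix

noncomputable section

/-- Sample mean `X̄ = (1/n) Σ_i X_i`. -/
def sampleMean {ι : Type*} [Fintype ι] (x : ι → ℝ) : ℝ := (∑ i, x i) / (Fintype.card ι : ℝ)

/-- Sample covariance `T_n = (1/n) Σ_i (X_i - X̄)(Y_i - Ȳ)`. -/
def sampleCov {ι : Type*} [Fintype ι] (x y : ι → ℝ) : ℝ :=
  (∑ i, (x i - sampleMean x) * (y i - sampleMean y)) / (Fintype.card ι : ℝ)

/-- Sample correlation `ρₙ`. -/
def sampleCorr {ι : Type*} [Fintype ι] (x y : ι → ℝ) : ℝ :=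
  (∑ i, (x i - sampleMean x) * (y i - sampleMean y)) /
    (Real.sqrt (∑ i, (x i - sampleMean x) ^ 2) * Real.sqrt (∑ i, (y i - sampleMean y) ^ 2))

/-- Convergence in distribution: weak convergence of the laws, tested against
bounded continuous functions. -/
def TendstoInDistribution (μ : ℕ → Measure ℝ) (ν : Measure ℝ) : Prop :=
  ∀ f : BoundedContinuousFunction ℝ ℝ,
    Tendsto (fun n => ∫ x, f x ∂(μ n)) atTop (𝓝 (∫ x, f x ∂ν))

/-- Convergence in probability to a constant, for a sequence of laws on `ℝ`. -/
def TendstoInProbability (μ : ℕ → Measure ℝ) (c : ℝ) : Prop :=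
  ∀ ε : ℝ, 0 < ε → Tendsto (fun n => μ n {x | ε ≤ |x - c|}) atTop (𝓝 0)

/-- `μ` is the centered multivariate Gaussian law `N(0, S)` on `ℝ^n`, characterized à la
Cramér–Wold: every linear functional `⟨a, ·⟩` has law `N(0, aᵀ S a)`. -/
def IsCenteredGaussian {n : ℕ} (μ : Measure (Fin n → ℝ)) (S : Matrix (Fin n) (Fin n) ℝ) : Prop :=
  IsProbabilityMeasure μ ∧
    ∀ a : Fin n → ℝ,
      Measure.map (fun x => ∑ i, a i * x i) μ =
        gaussianReal 0 (Real.toNNReal (a ⬝ᵥ S.mulVec a))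

namespace GQF
open Real
open scoped ENNReal NNReal


def J (k : ℕ) : ℝ := ∫ x : ℝ, x ^ k * Real.exp (-(1/2) * x ^ 2)

lemma integrable_pow_exp (k : ℕ) :
    Integrable (fun x : ℝ => x ^ k * Real.exp (-(1/2) * x ^ 2)) := by
  have hmain : Integrable (fun x : ℝ =>
      (1 + 4 ^ k * (k.factorial : ℝ)) * Real.exp (-(1/4) * x ^ 2)) :=
    (integrable_exp_neg_mul_sq (by norm_num : (0:ℝ) < 1/4)).const_mul _
  refine hmain.mono' ?_ ?_
  · exact (Continuous.mul (continuous_pow k)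
      (Real.continuous_exp.comp (by continuity))).aestronglyMeasurable
  · refine Filter.Eventually.of_forall (fun x => ?_)
    have h1 : |x| ^ k ≤ 1 + (x ^ 2) ^ k := by
      rcases le_total (|x|) 1 with h | h
      · have h0 : |x| ^ k ≤ 1 := pow_le_one₀ (abs_nonneg x) h
        have h2 : (0:ℝ) ≤ (x ^ 2) ^ k := pow_nonneg (sq_nonneg x) k
        linarith
      · have h2 : |x| ^ k ≤ (|x| ^ 2) ^ k := by
          rw [← pow_mul]
          exact pow_le_pow_right₀ h (by omega)
        calc |x| ^ k ≤ (|x| ^ 2) ^ k := h2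
          _ = (x ^ 2) ^ k := by rw [sq_abs]
          _ ≤ 1 + (x ^ 2) ^ k := by linarith
    have h2 : (x ^ 2) ^ k ≤ 4 ^ k * (k.factorial : ℝ) * Real.exp ((1/4) * x ^ 2) := by
      have ht : (0:ℝ) ≤ (1/4) * x ^ 2 := by positivity
      have hsum := Real.sum_le_exp_of_nonneg ht (k + 1)
      have hterm : ((1/4) * x ^ 2) ^ k / (k.factorial : ℝ) ≤ Real.exp ((1/4) * x ^ 2) := by
        refine le_trans ?_ hsum
        exact Finset.single_le_sum (f := fun i => ((1/4) * x ^ 2) ^ i / (i.factorial : ℝ))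
          (fun i _ => by positivity) (Finset.self_mem_range_succ k)
      have hfac : (0:ℝ) < (k.factorial : ℝ) := by positivity
      rw [div_le_iff₀ hfac] at hterm
      calc (x ^ 2) ^ k = 4 ^ k * ((1/4) * x ^ 2) ^ k := by
            rw [mul_pow, ← mul_assoc, ← mul_pow]; norm_num
        _ ≤ 4 ^ k * (Real.exp ((1/4) * x ^ 2) * (k.factorial : ℝ)) :=
            mul_le_mul_of_nonneg_left hterm (by positivity)
        _ = 4 ^ k * (k.factorial : ℝ) * Real.exp ((1/4) * x ^ 2) := by ring
    have hexp : Real.exp (-(1/2) * x ^ 2) ≤ Real.exp (-(1/4) * x ^ 2) :=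
      Real.exp_le_exp.2 (by nlinarith [sq_nonneg x])
    have hprod : Real.exp ((1/4) * x ^ 2) * Real.exp (-(1/2) * x ^ 2)
        = Real.exp (-(1/4) * x ^ 2) := by
      rw [← Real.exp_add]; ring_nf
    have hepos : (0:ℝ) < Real.exp (-(1/2) * x ^ 2) := Real.exp_pos _
    rw [norm_mul, norm_pow, Real.norm_eq_abs, Real.norm_eq_abs, abs_of_pos hepos]
    calc |x| ^ k * Real.exp (-(1/2) * x ^ 2)
        ≤ (1 + (x ^ 2) ^ k) * Real.exp (-(1/2) * x ^ 2) :=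
          mul_le_mul_of_nonneg_right h1 hepos.le
      _ ≤ Real.exp (-(1/4) * x ^ 2)
          + (x ^ 2) ^ k * Real.exp (-(1/2) * x ^ 2) := by nlinarith
      _ ≤ Real.exp (-(1/4) * x ^ 2)
          + 4 ^ k * (k.factorial : ℝ) * Real.exp (-(1/4) * x ^ 2) := by
            have h3 := mul_le_mul_of_nonneg_right h2 hepos.le
            rw [mul_assoc, hprod] at h3
            linarith
      _ = (1 + 4 ^ k * (k.factorial : ℝ)) * Real.exp (-(1/4) * x ^ 2) := by ring

lemma J_zero : J 0 = Real.sqrt (2 * π) := by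
  have := integral_gaussian (1/2 : ℝ)
  simp only [J, pow_zero, one_mul]
  rw [this]
  rw [show π / (1/2) = 2 * π by ring]

lemma J_rec (k : ℕ) : J (k + 2) = ((k : ℝ) + 1) * J k := by
  have hu : ∀ x : ℝ, HasDerivAt (fun y : ℝ => y ^ (k+1)) (((k:ℝ)+1) * x ^ k) x := by
    intro x; simpa using hasDerivAt_pow (k+1) x
  have hv : ∀ x : ℝ, HasDerivAt (fun y : ℝ => Real.exp (-(1/2) * y ^ 2))
      (Real.exp (-(1/2) * x ^ 2) * -x) x := by
    intro x
    have h1 : HasDerivAt (fun y : ℝ => -(1/2) * y ^ 2) (-x) x := by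
      have := (hasDerivAt_pow 2 x).const_mul (-(1/2) : ℝ)
      simpa using this.congr_deriv (by ring)
    simpa using h1.exp
  have key := integral_mul_deriv_eq_deriv_mul_of_integrable
    (u := fun y : ℝ => y ^ (k+1)) (v := fun y : ℝ => Real.exp (-(1/2) * y ^ 2))
    (u' := fun x : ℝ => ((k:ℝ)+1) * x ^ k)
    (v' := fun x : ℝ => Real.exp (-(1/2) * x ^ 2) * -x) (fun x _ => hu x) (fun x _ => hv x) ?_ ?_ ?_
  · have e1 : (fun x : ℝ => x ^ (k+1) * (Real.exp (-(1/2) * x ^ 2) * -x))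
        = fun x : ℝ => -(x ^ (k+2) * Real.exp (-(1/2) * x ^ 2)) := funext fun x => by ring
    have e2 : (fun x : ℝ => ((k:ℝ)+1) * x ^ k * Real.exp (-(1/2) * x ^ 2))
        = fun x : ℝ => ((k:ℝ)+1) * (x ^ k * Real.exp (-(1/2) * x ^ 2)) :=
      funext fun x => by ring
    beta_reduce at key
    rw [e1, e2, integral_neg, integral_const_mul] at key
    have : -J (k+2) = -(((k:ℝ)+1) * J k) := key
    linarith
  · have e1 : ((fun y : ℝ => y ^ (k+1)) * fun x : ℝ => Real.exp (-(1/2) * x ^ 2) * -x)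
        = fun x : ℝ => -(x ^ (k+2) * Real.exp (-(1/2) * x ^ 2)) := funext fun x => by
      simp only [Pi.mul_apply]; ring
    rw [e1]; exact (integrable_pow_exp (k+2)).neg
  · have e2 : ((fun x : ℝ => ((k:ℝ)+1) * x ^ k) * fun y : ℝ => Real.exp (-(1/2) * y ^ 2))
        = fun x : ℝ => ((k:ℝ)+1) * (x ^ k * Real.exp (-(1/2) * x ^ 2)) := funext fun x => by
      simp only [Pi.mul_apply]; ring
    rw [e2]; exact (integrable_pow_exp k).const_mul _
  · have e3 : ((fun y : ℝ => y ^ (k+1)) * fun y : ℝ => Real.exp (-(1/2) * y ^ 2))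
        = fun x : ℝ => x ^ (k+1) * Real.exp (-(1/2) * x ^ 2) := funext fun x => by
      simp only [Pi.mul_apply]
    rw [e3]; exact integrable_pow_exp (k+1)

lemma J_one : J 1 = 0 := by
  have hu : ∀ x : ℝ, HasDerivAt (fun _ : ℝ => (1:ℝ)) ((fun _ : ℝ => (0:ℝ)) x) x :=
    fun x => hasDerivAt_const x 1
  have hv : ∀ x : ℝ, HasDerivAt (fun y : ℝ => Real.exp (-(1/2) * y ^ 2))
      (Real.exp (-(1/2) * x ^ 2) * -x) x := by
    intro x
    have h1 : HasDerivAt (fun y : ℝ => -(1/2) * y ^ 2) (-x) x := by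
      have := (hasDerivAt_pow 2 x).const_mul (-(1/2) : ℝ)
      simpa using this.congr_deriv (by ring)
    simpa using h1.exp
  have key := integral_mul_deriv_eq_deriv_mul_of_integrable
    (u := fun _ : ℝ => (1:ℝ)) (v := fun y : ℝ => Real.exp (-(1/2) * y ^ 2))
    (u' := fun _ : ℝ => (0:ℝ))
    (v' := fun x : ℝ => Real.exp (-(1/2) * x ^ 2) * -x) (fun x _ => hu x) (fun x _ => hv x) ?_ ?_ ?_
  · have e1 : (fun x : ℝ => 1 * (Real.exp (-(1/2) * x ^ 2) * -x))
        = fun x : ℝ => -(x ^ 1 * Real.exp (-(1/2) * x ^ 2)) := funext fun x => by ring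
    beta_reduce at key
    rw [e1, integral_neg] at key
    simp only [zero_mul, integral_zero, neg_zero] at key
    have : -J 1 = 0 := key
    linarith
  · have e1 : ((fun _ : ℝ => (1:ℝ)) * fun x : ℝ => Real.exp (-(1/2) * x ^ 2) * -x)
        = fun x : ℝ => -(x ^ 1 * Real.exp (-(1/2) * x ^ 2)) := funext fun x => by
      simp only [Pi.mul_apply]; ring
    rw [e1]; exact (integrable_pow_exp 1).neg
  · have : ((fun _ : ℝ => (0:ℝ)) * fun y : ℝ => Real.exp (-(1/2) * y ^ 2)) = fun _ : ℝ => (0:ℝ) :=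
      funext fun x => by simp
    rw [this]; exact integrable_zero _ _ _
  · have e3 : ((fun _ : ℝ => (1:ℝ)) * fun y : ℝ => Real.exp (-(1/2) * y ^ 2))
        = fun x : ℝ => x ^ 0 * Real.exp (-(1/2) * x ^ 2) := funext fun x => by
      simp only [Pi.mul_apply]; ring
    rw [e3]; exact integrable_pow_exp 0

def gm : Measure ℝ := gaussianReal 0 1

instance : IsProbabilityMeasure gm := by unfold gm; infer_instance

lemma gm_eq : gm = volume.withDensity fun x => ((gaussianPDFReal 0 1 x).toNNReal : ℝ≥0∞) := by
  rw [gm, gaussianReal_of_var_ne_zero 0 one_ne_zero]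
  rfl

lemma pdf_eq (x : ℝ) :
    gaussianPDFReal 0 1 x = (Real.sqrt (2 * π))⁻¹ * Real.exp (-(1/2) * x ^ 2) := by
  rw [gaussianPDFReal]
  push_cast
  rw [mul_one, sub_zero]
  congr 1
  congr 1
  ring

def mo (k : ℕ) : ℝ := ∫ x, x ^ k ∂gm

lemma mo_eq (k : ℕ) : mo k = (Real.sqrt (2 * π))⁻¹ * J k := by
  rw [mo, gm_eq, integral_withDensity_eq_integral_smul
    (measurable_gaussianPDFReal 0 1).real_toNNReal]
  have : ∀ x : ℝ, (gaussianPDFReal 0 1 x).toNNReal • x ^ k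
      = (Real.sqrt (2 * π))⁻¹ * (x ^ k * Real.exp (-(1/2) * x ^ 2)) := by
    intro x
    rw [NNReal.smul_def, Real.coe_toNNReal _ (gaussianPDFReal_nonneg 0 1 x), pdf_eq, smul_eq_mul]
    ring
  simp only [this]
  rw [integral_const_mul]
  rfl

lemma sqrt2pi_pos : (0:ℝ) < Real.sqrt (2 * π) :=
  Real.sqrt_pos.2 (by positivity)

lemma mo_zero : mo 0 = 1 := by
  rw [mo_eq, J_zero, inv_mul_cancel₀ sqrt2pi_pos.ne']

lemma mo_one : mo 1 = 0 := by rw [mo_eq, J_one, mul_zero]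

lemma J_two : J 2 = Real.sqrt (2 * π) := by
  have h := J_rec 0
  norm_num at h
  rw [h, J_zero]

lemma mo_two : mo 2 = 1 := by
  rw [mo_eq, J_two, inv_mul_cancel₀ sqrt2pi_pos.ne']

lemma mo_three : mo 3 = 0 := by
  have h := J_rec 1
  norm_num [J_one] at h
  rw [mo_eq, h, mul_zero]

lemma mo_four : mo 4 = 3 := by
  have h2 := J_rec 2
  rw [show ((2:ℕ)+2) = 4 from rfl] at h2
  rw [mo_eq]
  rw [h2, J_two, show ((2:ℕ):ℝ) + 1 = 3 by norm_num,
    mul_comm (3:ℝ), ← mul_assoc, inv_mul_cancel₀ sqrt2pi_pos.ne', one_mul]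

lemma integrable_pow_gm (k : ℕ) : Integrable (fun x : ℝ => x ^ k) gm := by
  rw [gm_eq, integrable_withDensity_iff_integrable_smul
    (measurable_gaussianPDFReal 0 1).real_toNNReal]
  have : ∀ x : ℝ, (gaussianPDFReal 0 1 x).toNNReal • x ^ k
      = (Real.sqrt (2 * π))⁻¹ * (x ^ k * Real.exp (-(1/2) * x ^ 2)) := by
    intro x
    rw [NNReal.smul_def, Real.coe_toNNReal _ (gaussianPDFReal_nonneg 0 1 x), pdf_eq, smul_eq_mul]
    ring
  simp only [this]
  exact (integrable_pow_exp k).const_mul _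

variable {m : ℕ}

def μpi (m : ℕ) : Measure (Fin m → ℝ) := Measure.pi fun _ => gm

instance : IsProbabilityMeasure (μpi m) := by
  unfold μpi; infer_instance

lemma integrable_monomial (e : Fin m → ℕ) :
    Integrable (fun z : Fin m → ℝ => ∏ t, z t ^ e t) (μpi m) := by
  letI : MeasureSpace ℝ := ⟨gm⟩
  haveI : SigmaFinite (volume : Measure ℝ) := inferInstanceAs (SigmaFinite gm)
  exact Integrable.fintype_prod (𝕜 := ℝ) (f := fun i x => x ^ e i)
    (fun i => integrable_pow_gm (e i))

lemma integral_monomial (e : Fin m → ℕ) :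
    ∫ z : Fin m → ℝ, (∏ t, z t ^ e t) ∂(μpi m) = ∏ t, mo (e t) := by
  letI : MeasureSpace ℝ := ⟨gm⟩
  haveI : SigmaFinite (volume : Measure ℝ) := inferInstanceAs (SigmaFinite gm)
  exact integral_fintype_prod_eq_prod (fun i x => x ^ e i)

def ind (i t : Fin m) : ℕ := if t = i then 1 else 0

lemma prod_pow_ind (z : Fin m → ℝ) (i : Fin m) :
    ∏ t, z t ^ ind i t = z i := by
  have : ∀ t, z t ^ ind i t = if t = i then z t else 1 := by
    intro t; rw [ind]; split <;> simp
  simp only [this, Finset.prod_ite_eq', Finset.mem_univ, if_pos]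

lemma pair_prod (z : Fin m → ℝ) (i j : Fin m) :
    ∏ t, z t ^ (ind i t + ind j t) = z i * z j := by
  simp only [pow_add, Finset.prod_mul_distrib, prod_pow_ind]

lemma quad_prod (z : Fin m → ℝ) (i j k l : Fin m) :
    ∏ t, z t ^ (ind i t + ind j t + ind k t + ind l t) = z i * z j * (z k * z l) := by
  simp only [pow_add, Finset.prod_mul_distrib, prod_pow_ind]
  ring

lemma prod_mo_single (a : Fin m) (c : ℕ) :
    ∏ t, mo (if t = a then c else 0) = mo c := by
  have : ∀ t : Fin m, mo (if t = a then c else 0) = if t = a then mo c else 1 := by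
    intro t; split <;> simp [mo_zero]
  simp only [this, Finset.prod_ite_eq', Finset.mem_univ, if_pos]

lemma prod_mo_pair {a b : Fin m} (hab : a ≠ b) (c d : ℕ) :
    ∏ t, mo (if t = a then c else if t = b then d else 0) = mo c * mo d := by
  rw [← Finset.mul_prod_erase Finset.univ _ (Finset.mem_univ a), if_pos rfl]
  congr 1
  have hb : b ∈ Finset.univ.erase a := Finset.mem_erase.2 ⟨hab.symm, Finset.mem_univ b⟩
  rw [← Finset.mul_prod_erase _ _ hb, if_neg hab.symm, if_pos rfl]
  rw [Finset.prod_eq_one, mul_one]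
  intro t ht
  rw [Finset.mem_erase, Finset.mem_erase] at ht
  rw [if_neg ht.2.1, if_neg ht.1, mo_zero]

lemma W2 (i j : Fin m) :
    ∏ t, mo (ind i t + ind j t) = if i = j then 1 else 0 := by
  by_cases h : i = j
  · subst h
    have he : ∀ t : Fin m, ind i t + ind i t = if t = i then 2 else 0 := by
      intro t; rw [ind]; split <;> rfl
    simp [he, prod_mo_single, mo_two]
  · rw [if_neg h]
    refine Finset.prod_eq_zero (Finset.mem_univ i) ?_
    have : ind i i + ind j i = 1 := by simp [ind, h]
    rw [this, mo_one]

lemma W4 (i j k l : Fin m) :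
    ∏ t, mo (ind i t + ind j t + ind k t + ind l t) =
      (if i = j then (1:ℝ) else 0) * (if k = l then 1 else 0)
      + (if i = k then (1:ℝ) else 0) * (if j = l then 1 else 0)
      + (if i = l then (1:ℝ) else 0) * (if j = k then 1 else 0) := by
  have hzero : ∀ t₀ : Fin m,
      (ind i t₀ + ind j t₀ + ind k t₀ + ind l t₀ = 1 ∨
       ind i t₀ + ind j t₀ + ind k t₀ + ind l t₀ = 3) →
      ∏ t, mo (ind i t + ind j t + ind k t + ind l t) = 0 := by
    intro t₀ h
    refine Finset.prod_eq_zero (Finset.mem_univ t₀) ?_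
    rcases h with h | h <;> rw [h]
    · exact mo_one
    · exact mo_three
  have hpair : ∀ {a b : Fin m}, a ≠ b →
      (∀ t : Fin m, ind a t + ind b t + ind b t + ind a t
        = if t = a then 2 else if t = b then 2 else 0) →
      True := fun _ _ => trivial
  by_cases hij : i = j
  · subst hij
    by_cases hkl : k = l
    · subst hkl
      by_cases hik : i = k
      · subst hik
        have he : ∀ t : Fin m, ind i t + ind i t + ind i t + ind i t
            = if t = i then 4 else 0 := by
          intro t; rw [ind]; split <;> rfl
        simp only [he, prod_mo_single, mo_four, if_pos rfl]
        norm_num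
      · have he : ∀ t : Fin m, ind i t + ind i t + ind k t + ind k t
            = if t = i then 2 else if t = k then 2 else 0 := by
          intro t
          by_cases h1 : t = i <;> by_cases h2 : t = k <;>
            simp_all [ind]
        rw [Finset.prod_congr rfl fun t _ => congrArg mo (he t), prod_mo_pair hik, mo_two]
        simp [hik]
    · have h0 : ∏ t, mo (ind i t + ind i t + ind k t + ind l t) = 0 := by
        by_cases hik : i = k
        · subst hik
          exact hzero l (Or.inl (by simp [ind, (Ne.symm hkl : l ≠ i)]))
        · exact hzero k (Or.inl (by simp [ind, (Ne.symm hik : k ≠ i), hkl]))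
      rw [h0]
      rcases eq_or_ne i k with h | h <;> rcases eq_or_ne i l with h' | h' <;>
        simp_all
  · by_cases hkl : k = l
    · subst hkl
      have h0 : ∏ t, mo (ind i t + ind j t + ind k t + ind k t) = 0 := by
        by_cases hjk : j = k
        · subst hjk
          exact hzero j (Or.inr (by simp [ind, (Ne.symm hij : j ≠ i)]))
        · exact hzero j (Or.inl (by simp [ind, (Ne.symm hij : j ≠ i), hjk]))
      rw [h0]
      rcases eq_or_ne i k with h | h <;> rcases eq_or_ne j k with h' | h' <;>
        simp_all
    · by_cases hik : i = k
      · subst hik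
        by_cases hjl : j = l
        · subst hjl
          have he : ∀ t : Fin m, ind i t + ind j t + ind i t + ind j t
              = if t = i then 2 else if t = j then 2 else 0 := by
            intro t
            by_cases h1 : t = i <;> by_cases h2 : t = j <;> simp_all [ind]
          rw [Finset.prod_congr rfl fun t _ => congrArg mo (he t), prod_mo_pair hij, mo_two]
          simp [hij, hkl]
        · rw [hzero j (Or.inl (by simp [ind, (Ne.symm hij : j ≠ i), hjl]))]
          simp [hij, hjl, (Ne.symm hij : j ≠ i)]
      · by_cases hil : i = l
        · subst hil
          by_cases hjk : j = k
          · subst hjk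
            have he : ∀ t : Fin m, ind i t + ind j t + ind j t + ind i t
                = if t = i then 2 else if t = j then 2 else 0 := by
              intro t
              by_cases h1 : t = i <;> by_cases h2 : t = j <;> simp_all [ind]
            rw [Finset.prod_congr rfl fun t _ => congrArg mo (he t), prod_mo_pair hij, mo_two]
            simp [hij, hik]
          · rw [hzero j (Or.inl (by simp [ind, (Ne.symm hij : j ≠ i), hjk]))]
            simp [hij, hik, hjk]
        · rw [hzero i (Or.inl (by simp [ind, hij, hik, hil]))]
          simp [hij, hik, hil]


lemma sum_collapse (B : Matrix (Fin m) (Fin m) ℝ) (hsym : ∀ i j, B j i = B i j) :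
    ∑ i, ∑ j, ∑ k, ∑ l, B i j * B k l *
      ((if i = j then (1:ℝ) else 0) * (if k = l then 1 else 0)
      + (if i = k then (1:ℝ) else 0) * (if j = l then 1 else 0)
      + (if i = l then (1:ℝ) else 0) * (if j = k then 1 else 0))
    = B.trace ^ 2 + 2 * ∑ i, ∑ j, (B i j) ^ 2 := by
  have h1 : ∑ i, ∑ j, ∑ k, ∑ l : Fin m, B i j * B k l *
      ((if i = j then (1:ℝ) else 0) * (if k = l then 1 else 0)) = B.trace ^ 2 := by
    simp only [mul_ite, ite_mul, mul_one, mul_zero, zero_mul, one_mul,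
      Finset.sum_ite_eq, Finset.mem_univ, if_true]
    rw [trace, sq]
    simp only [diag, Finset.sum_mul, Finset.mul_sum]
    refine Finset.sum_congr rfl fun x _ => ?_
    rw [Finset.sum_comm]
    simp only [Finset.sum_ite_eq, Finset.mem_univ, if_true]
    exact Finset.sum_congr rfl fun y _ => mul_comm _ _
  have h2 : ∑ i, ∑ j, ∑ k, ∑ l : Fin m, B i j * B k l *
      ((if i = k then (1:ℝ) else 0) * (if j = l then 1 else 0)) = ∑ i, ∑ j, (B i j) ^ 2 := by
    simp only [mul_ite, ite_mul, mul_one, mul_zero, zero_mul, one_mul,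
      Finset.sum_ite_eq, Finset.mem_univ, if_true, sq]
  have h3 : ∑ i, ∑ j, ∑ k, ∑ l : Fin m, B i j * B k l *
      ((if i = l then (1:ℝ) else 0) * (if j = k then 1 else 0)) = ∑ i, ∑ j, (B i j) ^ 2 := by
    simp only [mul_ite, ite_mul, mul_one, mul_zero, zero_mul, one_mul,
      Finset.sum_ite_eq, Finset.mem_univ, if_true, sq]
    refine Finset.sum_congr rfl fun i _ => Finset.sum_congr rfl fun j _ => ?_
    rw [Finset.sum_comm]
    simp only [Finset.sum_ite_eq, Finset.mem_univ, if_true]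
    rw [hsym i j]
  calc ∑ i, ∑ j, ∑ k, ∑ l, B i j * B k l *
      ((if i = j then (1:ℝ) else 0) * (if k = l then 1 else 0)
      + (if i = k then (1:ℝ) else 0) * (if j = l then 1 else 0)
      + (if i = l then (1:ℝ) else 0) * (if j = k then 1 else 0))
      = (∑ i, ∑ j, ∑ k, ∑ l : Fin m, B i j * B k l *
          ((if i = j then (1:ℝ) else 0) * (if k = l then 1 else 0)))
      + (∑ i, ∑ j, ∑ k, ∑ l : Fin m, B i j * B k l *
          ((if i = k then (1:ℝ) else 0) * (if j = l then 1 else 0)))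
      + (∑ i, ∑ j, ∑ k, ∑ l : Fin m, B i j * B k l *
          ((if i = l then (1:ℝ) else 0) * (if j = k then 1 else 0))) := by
        simp only [mul_add, Finset.sum_add_distrib]
    _ = B.trace ^ 2 + 2 * ∑ i, ∑ j, (B i j) ^ 2 := by
        rw [h1, h2, h3]; ring

lemma integrable_pair (i j : Fin m) :
    Integrable (fun z : Fin m → ℝ => z i * z j) (μpi m) := by
  have h := integrable_monomial (m := m) (fun t => ind i t + ind j t)
  rwa [show (fun z : Fin m → ℝ => ∏ t, z t ^ (ind i t + ind j t))
      = fun z => z i * z j from funext fun z => pair_prod z i j] at h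

lemma integral_pair (i j : Fin m) :
    ∫ z : Fin m → ℝ, z i * z j ∂(μpi m) = if i = j then 1 else 0 := by
  have h := integral_monomial (m := m) (fun t => ind i t + ind j t)
  rwa [show (fun z : Fin m → ℝ => ∏ t, z t ^ (ind i t + ind j t))
      = fun z => z i * z j from funext fun z => pair_prod z i j, W2 i j] at h

lemma integrable_quad (i j k l : Fin m) :
    Integrable (fun z : Fin m → ℝ => z i * z j * (z k * z l)) (μpi m) := by
  have h := integrable_monomial (m := m) (fun t => ind i t + ind j t + ind k t + ind l t)
  rwa [show (fun z : Fin m → ℝ => ∏ t, z t ^ (ind i t + ind j t + ind k t + ind l t))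
      = fun z => z i * z j * (z k * z l) from funext fun z => quad_prod z i j k l] at h

lemma integral_quad (i j k l : Fin m) :
    ∫ z : Fin m → ℝ, z i * z j * (z k * z l) ∂(μpi m) =
      (if i = j then (1:ℝ) else 0) * (if k = l then 1 else 0)
      + (if i = k then (1:ℝ) else 0) * (if j = l then 1 else 0)
      + (if i = l then (1:ℝ) else 0) * (if j = k then 1 else 0) := by
  have h := integral_monomial (m := m) (fun t => ind i t + ind j t + ind k t + ind l t)
  rwa [show (fun z : Fin m → ℝ => ∏ t, z t ^ (ind i t + ind j t + ind k t + ind l t))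
      = fun z => z i * z j * (z k * z l) from funext fun z => quad_prod z i j k l,
    W4 i j k l] at h

lemma Q_expand (B : Matrix (Fin m) (Fin m) ℝ) (z : Fin m → ℝ) :
    z ⬝ᵥ B.mulVec z = ∑ p : Fin m × Fin m, B p.1 p.2 * (z p.1 * z p.2) := by
  rw [dotProduct, Fintype.sum_prod_type]
  refine Finset.sum_congr rfl fun i _ => ?_
  rw [Matrix.mulVec, dotProduct, Finset.mul_sum]
  exact Finset.sum_congr rfl fun j _ => by ring

lemma integrable_Q (B : Matrix (Fin m) (Fin m) ℝ) :
    Integrable (fun z : Fin m → ℝ => z ⬝ᵥ B.mulVec z) (μpi m) := by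
  rw [show (fun z : Fin m → ℝ => z ⬝ᵥ B.mulVec z)
      = fun z => ∑ p : Fin m × Fin m, B p.1 p.2 * (z p.1 * z p.2)
      from funext fun z => Q_expand B z]
  exact integrable_finset_sum _ fun p _ => (integrable_pair p.1 p.2).const_mul _

lemma integral_Q (B : Matrix (Fin m) (Fin m) ℝ) :
    ∫ z : Fin m → ℝ, z ⬝ᵥ B.mulVec z ∂(μpi m) = B.trace := by
  rw [show (fun z : Fin m → ℝ => z ⬝ᵥ B.mulVec z)
      = fun z => ∑ p : Fin m × Fin m, B p.1 p.2 * (z p.1 * z p.2)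
      from funext fun z => Q_expand B z]
  rw [integral_finset_sum _ fun p _ => (integrable_pair p.1 p.2).const_mul _]
  have : ∀ p : Fin m × Fin m,
      ∫ z : Fin m → ℝ, B p.1 p.2 * (z p.1 * z p.2) ∂(μpi m)
      = B p.1 p.2 * (if p.1 = p.2 then 1 else 0) := by
    intro p
    rw [integral_const_mul, integral_pair]
  rw [Finset.sum_congr rfl fun p _ => this p, Fintype.sum_prod_type]
  simp only [mul_ite, mul_one, mul_zero, Finset.sum_ite_eq, Finset.mem_univ, if_true]
  rfl

lemma Qsq_expand (B : Matrix (Fin m) (Fin m) ℝ) (z : Fin m → ℝ) :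
    (z ⬝ᵥ B.mulVec z) ^ 2 = ∑ p : (Fin m × Fin m) × (Fin m × Fin m),
      B p.1.1 p.1.2 * B p.2.1 p.2.2 * (z p.1.1 * z p.1.2 * (z p.2.1 * z p.2.2)) := by
  rw [Q_expand B z, sq, Finset.sum_mul_sum]
  conv_rhs => rw [Fintype.sum_prod_type]
  refine Finset.sum_congr rfl fun p _ => Finset.sum_congr rfl fun q _ => by ring

lemma integrable_Qsq (B : Matrix (Fin m) (Fin m) ℝ) :
    Integrable (fun z : Fin m → ℝ => (z ⬝ᵥ B.mulVec z) ^ 2) (μpi m) := by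
  rw [show (fun z : Fin m → ℝ => (z ⬝ᵥ B.mulVec z) ^ 2)
      = fun z => ∑ p : (Fin m × Fin m) × (Fin m × Fin m),
        B p.1.1 p.1.2 * B p.2.1 p.2.2 * (z p.1.1 * z p.1.2 * (z p.2.1 * z p.2.2))
      from funext fun z => Qsq_expand B z]
  exact integrable_finset_sum _ fun p _ =>
    (integrable_quad p.1.1 p.1.2 p.2.1 p.2.2).const_mul _

lemma integral_Qsq (B : Matrix (Fin m) (Fin m) ℝ) (hsym : ∀ i j, B j i = B i j) :
    ∫ z : Fin m → ℝ, (z ⬝ᵥ B.mulVec z) ^ 2 ∂(μpi m)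
      = B.trace ^ 2 + 2 * ∑ i, ∑ j, (B i j) ^ 2 := by
  rw [show (fun z : Fin m → ℝ => (z ⬝ᵥ B.mulVec z) ^ 2)
      = fun z => ∑ p : (Fin m × Fin m) × (Fin m × Fin m),
        B p.1.1 p.1.2 * B p.2.1 p.2.2 * (z p.1.1 * z p.1.2 * (z p.2.1 * z p.2.2))
      from funext fun z => Qsq_expand B z]
  rw [integral_finset_sum _ fun p _ =>
    (integrable_quad p.1.1 p.1.2 p.2.1 p.2.2).const_mul _]
  have : ∀ p : (Fin m × Fin m) × (Fin m × Fin m),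
      ∫ z : Fin m → ℝ, B p.1.1 p.1.2 * B p.2.1 p.2.2
          * (z p.1.1 * z p.1.2 * (z p.2.1 * z p.2.2)) ∂(μpi m)
      = B p.1.1 p.1.2 * B p.2.1 p.2.2 *
        ((if p.1.1 = p.1.2 then (1:ℝ) else 0) * (if p.2.1 = p.2.2 then 1 else 0)
        + (if p.1.1 = p.2.1 then (1:ℝ) else 0) * (if p.1.2 = p.2.2 then 1 else 0)
        + (if p.1.1 = p.2.2 then (1:ℝ) else 0) * (if p.1.2 = p.2.1 then 1 else 0)) := by
    intro p
    rw [integral_const_mul, integral_quad]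
  rw [Finset.sum_congr rfl fun p _ => this p, ← sum_collapse B hsym]
  rw [Fintype.sum_prod_type, Fintype.sum_prod_type]
  refine Finset.sum_congr rfl fun i _ => Finset.sum_congr rfl fun j _ => ?_
  rw [Fintype.sum_prod_type]
lemma integrable_h (B : Matrix (Fin m) (Fin m) ℝ) (c : ℝ) :
    Integrable (fun z : Fin m → ℝ => ((z ⬝ᵥ B.mulVec z) / c - 1) ^ 2) (μpi m) := by
  have he : (fun z : Fin m → ℝ => ((z ⬝ᵥ B.mulVec z) / c - 1) ^ 2)
      = fun z => (1/c^2) * (z ⬝ᵥ B.mulVec z) ^ 2 - (2/c) * (z ⬝ᵥ B.mulVec z) + 1 := by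
    funext z; ring
  rw [he]
  exact (((integrable_Qsq B).const_mul _).sub ((integrable_Q B).const_mul _)).add
    (integrable_const 1)

lemma integral_h (B : Matrix (Fin m) (Fin m) ℝ) (hsym : ∀ i j, B j i = B i j)
    (hc : 0 < B.trace) :
    ∫ z : Fin m → ℝ, ((z ⬝ᵥ B.mulVec z) / B.trace - 1) ^ 2 ∂(μpi m)
      = 2 * (∑ i, ∑ j, (B i j) ^ 2) / B.trace ^ 2 := by
  set c := B.trace with hcdef
  have he : (fun z : Fin m → ℝ => ((z ⬝ᵥ B.mulVec z) / c - 1) ^ 2)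
      = fun z => (1/c^2) * (z ⬝ᵥ B.mulVec z) ^ 2 - (2/c) * (z ⬝ᵥ B.mulVec z) + 1 := by
    funext z; field_simp; ring
  rw [he, integral_add ?hi1 ?hi2, integral_sub ?hi3 ?hi4,
    integral_const_mul, integral_const_mul, integral_Qsq B hsym, integral_Q, integral_const]
  case hi1 => exact ((integrable_Qsq B).const_mul _).sub ((integrable_Q B).const_mul _)
  case hi2 => exact integrable_const 1
  case hi3 => exact (integrable_Qsq B).const_mul _
  case hi4 => exact (integrable_Q B).const_mul _
  simp only [measure_univ, probReal_univ, ENNReal.toReal_one, smul_eq_mul, mul_one, one_mul]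
  rw [← hcdef]
  field_simp
  ring

end GQF

open GQF in
/-- **(Concentration of Gaussian quadratic forms).** Let `Aₙ` be symmetric positive
semidefinite with eigenvalues `λ₁ ≥ … ≥ λₙ ≥ 0`, `Tr(Aₙ) > 0` and `λ₁/Σᵢλᵢ → 0`. If
`Z ~ N(0, Iₙ)`, then `E[ZᵀAₙZ] = Tr(Aₙ)` and `ZᵀAₙZ / Tr(Aₙ) → 1` in probability.
(The sequence of models has dimension `n + 1`.) -/
theorem gaussian_quadratic_form_concentration
    (A : (n : ℕ) → Matrix (Fin (n + 1)) (Fin (n + 1)) ℝ)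
    (hA : ∀ n, (A n).PosSemidef)
    (htr : ∀ n, 0 < Matrix.trace (A n))
    (lam : (n : ℕ) → Fin (n + 1) → ℝ)
    (hdiag : ∀ n, ∃ U : Matrix (Fin (n + 1)) (Fin (n + 1)) ℝ, Uᵀ * U = 1 ∧
      A n = U * Matrix.diagonal (lam n) * Uᵀ)
    (hmono : ∀ n, ∀ i j : Fin (n + 1), i ≤ j → lam n j ≤ lam n i)
    (hnonneg : ∀ n i, 0 ≤ lam n i)
    (hsmall : Tendsto (fun n => lam n 0 / ∑ i, lam n i) atTop (𝓝 0)) :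
    (∀ n, (∫ z : Fin (n + 1) → ℝ, z ⬝ᵥ (A n).mulVec z
        ∂(Measure.pi fun _ : Fin (n + 1) => gaussianReal 0 1)) = Matrix.trace (A n)) ∧
    TendstoInProbability
      (fun n => Measure.map
        (fun z : Fin (n + 1) → ℝ => (z ⬝ᵥ (A n).mulVec z) / Matrix.trace (A n))
        (Measure.pi fun _ : Fin (n + 1) => gaussianReal 0 1))
      1 := by
  have hsym : ∀ n (i j : Fin (n+1)), (A n) j i = (A n) i j := by
    intro n i j
    have h := (hA n).1
    have h2 : star (A n i j) = A n j i := by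
      rw [← Matrix.conjTranspose_apply]
      exact congrFun (congrFun h j) i
    simpa using h2.symm
  -- trace identities
  have htrconj : ∀ n (U M : Matrix (Fin (n+1)) (Fin (n+1)) ℝ), Uᵀ * U = 1 →
      (U * M * Uᵀ).trace = M.trace := by
    intro n U M hUU
    rw [Matrix.trace_mul_comm (U * M) Uᵀ, ← Matrix.mul_assoc, hUU, Matrix.one_mul]
  have htrlam : ∀ n, (A n).trace = ∑ i, lam n i := by
    intro n
    obtain ⟨U, hUU, hAeq⟩ := hdiag n
    rw [hAeq, htrconj n U _ hUU, Matrix.trace_diagonal]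
  have hSlam : ∀ n, (∑ i, ∑ j, ((A n) i j) ^ 2) = ∑ i, (lam n i) ^ 2 := by
    intro n
    obtain ⟨U, hUU, hAeq⟩ := hdiag n
    have hBB : A n * A n = U * Matrix.diagonal (fun i => lam n i * lam n i) * Uᵀ := by
      rw [hAeq, ← Matrix.diagonal_mul_diagonal]
      simp only [Matrix.mul_assoc]
      rw [← Matrix.mul_assoc Uᵀ U, hUU, Matrix.one_mul]
    have h1 : (A n * A n).trace = ∑ i, (lam n i) ^ 2 := by
      rw [hBB, htrconj n U _ hUU, Matrix.trace_diagonal]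
      exact Finset.sum_congr rfl fun i _ => (sq (lam n i)).symm
    rw [← h1, Matrix.trace]
    simp only [Matrix.diag, Matrix.mul_apply]
    exact Finset.sum_congr rfl fun i _ => Finset.sum_congr rfl fun j _ => by
      rw [hsym n i j, sq]
  have Q_expand : ∀ {m : ℕ} (B : Matrix (Fin m) (Fin m) ℝ) (z : Fin m → ℝ),
      z ⬝ᵥ B.mulVec z = ∑ p : Fin m × Fin m, B p.1 p.2 * (z p.1 * z p.2) := by
    intro m B z
    rw [dotProduct, Fintype.sum_prod_type]
    refine Finset.sum_congr rfl fun i _ => ?_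
    rw [Matrix.mulVec, dotProduct, Finset.mul_sum]
    exact Finset.sum_congr rfl fun j _ => by ring
  constructor
  · exact fun n => integral_Q (A n)
  · intro ε hε
    have hεsq : (0:ℝ) < ε ^ 2 := by positivity
    have key : ∀ n, (Measure.map
        (fun z : Fin (n+1) → ℝ => (z ⬝ᵥ (A n).mulVec z) / Matrix.trace (A n))
        (Measure.pi fun _ : Fin (n+1) => gaussianReal 0 1)) {x | ε ≤ |x - 1|}
        ≤ ENNReal.ofReal (2 * (lam n 0 / ∑ i, lam n i) / ε ^ 2) := by
      intro n
      show (Measure.map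
        (fun z : Fin (n+1) → ℝ => (z ⬝ᵥ (A n).mulVec z) / Matrix.trace (A n))
        (μpi (n+1))) {x | ε ≤ |x - 1|}
        ≤ ENNReal.ofReal (2 * (lam n 0 / ∑ i, lam n i) / ε ^ 2)
      haveI : IsFiniteMeasure (μpi (n+1)) :=
        by infer_instance
      have hc : 0 < (A n).trace := htr n
      have hQcont : Continuous fun z : Fin (n+1) → ℝ =>
          z ⬝ᵥ (A n).mulVec z / (A n).trace := by
        apply Continuous.div_const
        rw [show (fun z : Fin (n+1) → ℝ => z ⬝ᵥ (A n).mulVec z)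
            = fun z => ∑ p : Fin (n+1) × Fin (n+1), (A n) p.1 p.2 * (z p.1 * z p.2)
            from funext fun z => Q_expand (A n) z]
        exact continuous_finset_sum _ fun p _ =>
          continuous_const.mul ((continuous_apply p.1).mul (continuous_apply p.2))
      have hms : MeasurableSet {x : ℝ | ε ≤ |x - 1|} :=
        (isClosed_le continuous_const ((continuous_id.sub continuous_const).abs)).measurableSet
      rw [Measure.map_apply hQcont.measurable hms]
      have hsub : (fun z : Fin (n+1) → ℝ => z ⬝ᵥ (A n).mulVec z / (A n).trace) ⁻¹'
            {x | ε ≤ |x - 1|}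
          ⊆ {z : Fin (n+1) → ℝ | ε ^ 2 ≤ ((z ⬝ᵥ (A n).mulVec z) / (A n).trace - 1) ^ 2} := by
        intro z hz
        have hz' : ε ≤ |z ⬝ᵥ (A n).mulVec z / (A n).trace - 1| := hz
        have h2 := pow_le_pow_left₀ hε.le hz' 2
        rwa [sq_abs] at h2
      have hmark := mul_meas_ge_le_integral_of_nonneg
        (μ := μpi (n+1))
        (f := fun z : Fin (n+1) → ℝ => ((z ⬝ᵥ (A n).mulVec z) / (A n).trace - 1) ^ 2)
        (ae_of_all _ fun z => sq_nonneg _)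
        (integrable_h (A n) ((A n).trace)) (ε ^ 2)
      rw [integral_h (A n) (hsym n) hc] at hmark
      have hV : 2 * (∑ i, ∑ j, ((A n) i j) ^ 2) / (A n).trace ^ 2
          ≤ 2 * (lam n 0 / ∑ i, lam n i) := by
        have hc' : (A n).trace = ∑ i, lam n i := htrlam n
        have hcpos : 0 < ∑ i, lam n i := hc' ▸ hc
        have hSb : (∑ i, ∑ j, ((A n) i j) ^ 2) ≤ lam n 0 * ∑ i, lam n i := by
          rw [hSlam n]
          calc ∑ i, (lam n i) ^ 2 ≤ ∑ i, lam n 0 * lam n i :=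
              Finset.sum_le_sum fun i _ => by
                rw [sq]
                exact mul_le_mul_of_nonneg_right (hmono n 0 i (Fin.zero_le i)) (hnonneg n i)
            _ = lam n 0 * ∑ i, lam n i := by rw [Finset.mul_sum]
        rw [hc']
        rw [div_le_iff₀ (by positivity), mul_comm (2 : ℝ) (lam n 0 / ∑ i, lam n i)]
        rw [div_mul_eq_mul_div, div_mul_eq_mul_div, le_div_iff₀ hcpos]
        nlinarith [hSb, hcpos]
      have h1 : ((μpi (n+1)) ((fun z : Fin (n+1) → ℝ =>
            z ⬝ᵥ (A n).mulVec z / (A n).trace) ⁻¹' {x | ε ≤ |x - 1|})).toReal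
          ≤ 2 * (lam n 0 / ∑ i, lam n i) / ε ^ 2 := by
        have ha := ENNReal.toReal_mono (measure_ne_top (μpi (n+1)) _) (measure_mono hsub)
        have hb : ((μpi (n+1)) {z : Fin (n+1) → ℝ |
            ε ^ 2 ≤ ((z ⬝ᵥ (A n).mulVec z) / (A n).trace - 1) ^ 2}).toReal
            ≤ (2 * (∑ i, ∑ j, ((A n) i j) ^ 2) / (A n).trace ^ 2) / ε ^ 2 := by
          rw [le_div_iff₀ hεsq]
          rw [measureReal_def] at hmark
          nlinarith [hmark]
        have hd : (2 * (∑ i, ∑ j, ((A n) i j) ^ 2) / (A n).trace ^ 2) / ε ^ 2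
            ≤ 2 * (lam n 0 / ∑ i, lam n i) / ε ^ 2 :=
          by gcongr
        linarith
      exact (ENNReal.le_ofReal_iff_toReal_le (measure_ne_top _ _)
        (le_trans (ENNReal.toReal_nonneg) h1)).2 h1
    have hub : Tendsto (fun n => ENNReal.ofReal (2 * (lam n 0 / ∑ i, lam n i) / ε ^ 2))
        atTop (𝓝 0) := by
      have h1 : Tendsto (fun n => 2 * (lam n 0 / ∑ i, lam n i) / ε ^ 2) atTop (𝓝 0) := by
        have h2 := (hsmall.const_mul (2:ℝ)).div_const (ε ^ 2)
        simpa using h2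
      simpa using ENNReal.tendsto_ofReal h1
    exact tendsto_of_tendsto_of_tendsto_of_le_of_le tendsto_const_nhds hub
      (fun n => zero_le) key

end
end

section
/- For each n let λ_{1,n} ≥ λ_{2,n} ≥ … ≥ λ_{n,n} ≥ 0 be nonnegative reals with λ_{1,n} > 0 and n λ_{2,n}² / λ_{1,n}² → 0 as n → ∞, and let Z ~ N(0, I_n). Then (Σ_{i=1}^n λ_{i,n}² Z_i²) / λ_{1,n}² converges in distribution to the chi-squared distribution χ²_1 with one degree of freedom. -/
open MeasureTheory ProbabilityTheory Filter Topology Matrix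

noncomputable section

/-- The chi-squared distribution with one degree of freedom: the law of the square of a
standard normal random variable. -/
def chiSqOne : Measure ℝ := Measure.map (fun x : ℝ => x ^ 2) (gaussianReal 0 1)

lemma myMapEvalPi {ι : Type*} [Fintype ι] [DecidableEq ι] (μ : ι → Measure ℝ)
    [∀ i, IsProbabilityMeasure (μ i)] (i : ι) :
    Measure.map (fun z : ι → ℝ => z i) (Measure.pi μ) = μ i := by
  refine Measure.ext fun s hs => ?_
  rw [Measure.map_apply (measurable_pi_apply i) hs]
  have h : (fun z : ι → ℝ => z i) ⁻¹' s =
      Set.pi Set.univ (Function.update (fun _ => (Set.univ : Set ℝ)) i s) :=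
    Set.eval_preimage
  rw [h, Measure.pi_pi]
  rw [Fintype.prod_eq_single i (fun j hj => by simp [Function.update_of_ne hj])]
  simp

lemma myIntegrableSq : Integrable (fun x : ℝ => x ^ 2) (gaussianReal 0 1) := by
  rw [gaussianReal_of_var_ne_zero 0 one_ne_zero]
  rw [integrable_withDensity_iff (measurable_gaussianPDF 0 1)
    (ae_of_all _ fun x => ENNReal.ofReal_lt_top)]
  have key : Integrable (fun x : ℝ => x ^ (2 : ℝ) * Real.exp (-(1/2) * x ^ 2)) :=
    integrable_rpow_mul_exp_neg_mul_sq (b := 1/2) (s := 2) (by norm_num) (by norm_num)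
  have key2 : Integrable (fun x : ℝ => x ^ 2 * Real.exp (-(1/2) * x ^ 2)) := by
    refine key.congr (ae_of_all _ fun x => ?_)
    simp only []
    rw [show ((2:ℝ)) = ((2:ℕ):ℝ) by norm_num, Real.rpow_natCast]
  refine (key2.const_mul ((Real.sqrt (2 * Real.pi))⁻¹)).congr (ae_of_all _ fun x => ?_)
  show _ = x ^ 2 * (gaussianPDF 0 1 x).toReal
  rw [show gaussianPDF 0 1 x = ENNReal.ofReal (gaussianPDFReal 0 1 x) from rfl,
    ENNReal.toReal_ofReal (gaussianPDFReal_nonneg 0 1 x), gaussianPDFReal]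
  push_cast
  ring_nf

/-- **(Weighted sum of squared Gaussians with one dominant weight).** If
`λ₁ₙ ≥ … ≥ λₙₙ ≥ 0`, `λ₁ₙ > 0`, `n λ₂ₙ²/λ₁ₙ² → 0` and `Z ~ N(0, Iₙ)`, then
`(Σᵢ λᵢₙ² Zᵢ²)/λ₁ₙ² →d χ²₁`. (The sequence of models has dimension `n + 2`.) -/
theorem weighted_squares_chisq_limit
    (lam : (n : ℕ) → Fin (n + 2) → ℝ)
    (hmono : ∀ n, ∀ i j : Fin (n + 2), i ≤ j → lam n j ≤ lam n i)
    (hnonneg : ∀ n i, 0 ≤ lam n i)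
    (hpos : ∀ n, 0 < lam n 0)
    (hsmall : Tendsto (fun n : ℕ => ((n : ℝ) + 2) * (lam n 1) ^ 2 / (lam n 0) ^ 2)
      atTop (𝓝 0)) :
    TendstoInDistribution
      (fun n => Measure.map
        (fun z : Fin (n + 2) → ℝ => (∑ i, (lam n i) ^ 2 * z i ^ 2) / (lam n 0) ^ 2)
        (Measure.pi fun _ : Fin (n + 2) => gaussianReal 0 1))
      chiSqOne := by
  intro f
  have hsq_meas : Measurable fun x : ℝ => x ^ 2 := (continuous_pow 2).measurable
  set V : ℝ := ∫ x, x ^ 2 ∂(gaussianReal 0 1) with hVdef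
  have hV0 : 0 ≤ V := integral_nonneg fun x => sq_nonneg x
  have hSmeas : ∀ n, Measurable fun z : Fin (n+2) → ℝ =>
      (∑ i, lam n i ^ 2 * z i ^ 2) / lam n 0 ^ 2 := by
    intro n
    apply Measurable.div_const
    exact Finset.measurable_sum _ fun i _ => ((measurable_pi_apply i).pow_const 2).const_mul _
  suffices H : Tendsto (fun n => ∫ z, f ((∑ i, lam n i ^ 2 * z i ^ 2) / lam n 0 ^ 2)
      ∂(Measure.pi fun _ : Fin (n+2) => gaussianReal 0 1)) atTop (𝓝 (∫ x, f x ∂chiSqOne)) by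
    refine H.congr fun n => ?_
    exact (integral_map (hSmeas n).aemeasurable
      f.continuous.measurable.aestronglyMeasurable).symm
  rw [Metric.tendsto_atTop]
  intro ε hε
  set C : ℝ := ‖f‖ with hCdef
  have hCnn : 0 ≤ C := norm_nonneg f
  set ε' : ℝ := ε / (4 * (C + 1)) with hε'def
  have hε' : 0 < ε' := by positivity
  set M : ℝ := (V + 1) / ε' with hMdef
  have hM : 0 < M := by positivity
  have hK := (isCompact_Icc (a := (0:ℝ)) (b := M+1)).uniformContinuousOn_of_continuous
    f.continuous.continuousOn
  rw [Metric.uniformContinuousOn_iff] at hK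
  obtain ⟨δ₀, hδ₀, hδK⟩ := hK ε' hε'
  set δ : ℝ := min δ₀ 1 with hδdef
  have hδpos : 0 < δ := lt_min hδ₀ one_pos
  have hδ1 : δ ≤ 1 := min_le_right _ _
  have hδδ₀ : δ ≤ δ₀ := min_le_left _ _
  have hev : ∀ᶠ n : ℕ in atTop, ((n:ℝ)+2) * lam n 1 ^ 2 / lam n 0 ^ 2 * V < δ * ε' := by
    have h0 : Tendsto (fun n : ℕ => ((n:ℝ)+2) * lam n 1 ^ 2 / lam n 0 ^ 2 * V)
        atTop (𝓝 0) := by simpa using hsmall.mul_const V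
    exact h0.eventually_lt_const (by positivity)
  obtain ⟨N, hN⟩ := eventually_atTop.mp hev
  refine ⟨N, fun n hn => ?_⟩
  -- fixed n
  set π : Measure (Fin (n+2) → ℝ) := Measure.pi (fun _ => gaussianReal 0 1) with hπ
  haveI : IsProbabilityMeasure π := by rw [hπ]; infer_instance
  set Sn : (Fin (n+2) → ℝ) → ℝ :=
    fun z => (∑ i, lam n i ^ 2 * z i ^ 2) / lam n 0 ^ 2 with hSn
  set c : Fin (n+2) → ℝ := fun i => lam n i ^ 2 / lam n 0 ^ 2 with hc
  set h : (Fin (n+2) → ℝ) → ℝ := fun z => z 0 ^ 2 with hh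
  set r : (Fin (n+2) → ℝ) → ℝ := fun z => ∑ i ∈ Finset.univ.erase 0, c i * z i ^ 2 with hr
  have hlz : (lam n 0)^2 ≠ 0 := pow_ne_zero 2 (hpos n).ne'
  have hdecomp : ∀ z, Sn z = h z + r z := by
    intro z
    rw [hSn, hh, hr]
    simp only
    rw [Finset.sum_div, ← Finset.add_sum_erase Finset.univ _ (Finset.mem_univ 0)]
    congr 1
    · rw [mul_comm, mul_div_assoc, div_self hlz, mul_one]
    · exact Finset.sum_congr rfl fun i _ => (mul_div_right_comm _ _ _)
  have hrnonneg : ∀ z, 0 ≤ r z := fun z => Finset.sum_nonneg fun i _ =>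
    mul_nonneg (div_nonneg (sq_nonneg _) (sq_nonneg _)) (sq_nonneg _)
  have hmapeval : ∀ i : Fin (n+2),
      Measure.map (fun z : Fin (n+2) → ℝ => z i) π = gaussianReal 0 1 :=
    fun i => myMapEvalPi _ i
  have hsqint : ∀ i : Fin (n+2), Integrable (fun z : Fin (n+2) → ℝ => z i ^ 2) π := by
    intro i
    have h1 : Integrable (fun x : ℝ => x ^ 2)
        (Measure.map (fun z : Fin (n+2) → ℝ => z i) π) := by
      rw [hmapeval i]; exact myIntegrableSq
    exact (integrable_map_measure hsq_meas.aestronglyMeasurable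
      (measurable_pi_apply i).aemeasurable).mp h1
  have hsqintegral : ∀ i : Fin (n+2), ∫ z, z i ^ 2 ∂π = V := by
    intro i
    rw [hVdef, ← hmapeval i,
      integral_map (measurable_pi_apply i).aemeasurable hsq_meas.aestronglyMeasurable]
  have hrInt : Integrable r π :=
    integrable_finset_sum _ fun i _ => ((hsqint i).const_mul (c i))
  have hIr : ∫ z, r z ∂π ≤ ((n:ℝ)+2) * lam n 1 ^ 2 / lam n 0 ^ 2 * V := by
    have e1 : ∫ z, r z ∂π = ∑ i ∈ Finset.univ.erase 0, c i * V := by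
      rw [hr]
      rw [integral_finset_sum _ (fun i _ => (hsqint i).const_mul (c i))]
      exact Finset.sum_congr rfl fun i _ => by rw [integral_const_mul, hsqintegral i]
    have e2 : ∑ i ∈ Finset.univ.erase 0, c i * V ≤
        ∑ _i ∈ Finset.univ.erase (0 : Fin (n+2)), c 1 * V := by
      refine Finset.sum_le_sum fun i hi => ?_
      have hi0 : i ≠ 0 := Finset.ne_of_mem_erase hi
      have h1i : (1 : Fin (n+2)) ≤ i := by
        rw [Fin.le_def]
        simp only [Fin.val_one]
        exact Nat.one_le_iff_ne_zero.mpr fun hz => hi0 (Fin.ext hz)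
      have hlam : lam n i ≤ lam n 1 := hmono n 1 i h1i
      have hcc : c i ≤ c 1 := by
        rw [hc]
        exact div_le_div_of_nonneg_right
          (pow_le_pow_left₀ (hnonneg n i) hlam 2) (by positivity) |>.trans_eq rfl
      exact mul_le_mul_of_nonneg_right hcc hV0
    have e3 : ∑ _i ∈ Finset.univ.erase (0 : Fin (n+2)), c 1 * V = ((n:ℝ)+1) * (c 1 * V) := by
      rw [Finset.sum_const, Finset.card_erase_of_mem (Finset.mem_univ 0),
        Finset.card_univ, Fintype.card_fin]
      simp [nsmul_eq_mul]
      try ring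
    have e4 : ((n:ℝ)+1) * (c 1 * V) ≤ ((n:ℝ)+2) * lam n 1 ^ 2 / lam n 0 ^ 2 * V := by
      rw [hc]
      have hc1 : 0 ≤ lam n 1 ^ 2 / lam n 0 ^ 2 * V :=
        mul_nonneg (div_nonneg (sq_nonneg _) (sq_nonneg _)) hV0
      have : ((n:ℝ)+2) * lam n 1 ^ 2 / lam n 0 ^ 2 * V
          = ((n:ℝ)+2) * (lam n 1 ^ 2 / lam n 0 ^ 2 * V) := by ring
      rw [this]
      nlinarith [hc1]
    linarith [e1.le.trans (e2.trans (e3.le.trans e4)), e1.ge]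
  have hIrlt : ∫ z, r z ∂π < δ * ε' := lt_of_le_of_lt hIr (hN n hn)
  have hrmeas : Measurable r := by
    rw [hr]
    exact Finset.measurable_sum _ fun i _ => ((measurable_pi_apply i).pow_const 2).const_mul _
  have hhmeas : Measurable h := (measurable_pi_apply 0).pow_const 2
  set A : Set (Fin (n+2) → ℝ) := {z | M ≤ h z} with hA₀
  set B : Set (Fin (n+2) → ℝ) := {z | δ ≤ r z} with hB₀
  have hAmeas : MeasurableSet A := measurableSet_le measurable_const hhmeas
  have hBmeas : MeasurableSet B := measurableSet_le measurable_const hrmeas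
  have hhInt : Integrable h π := hsqint 0
  have hIh : ∫ z, h z ∂π = V := hsqintegral 0
  have hAbound : (π A).toReal ≤ ε' := by
    have hmar := mul_meas_ge_le_integral_of_nonneg
      (ae_of_all _ fun z => sq_nonneg (z 0) : 0 ≤ᵐ[π] h) hhInt M
    rw [hIh] at hmar
    have h1 : (π A).toReal ≤ V / M := by
      rw [le_div_iff₀ hM]; exact (mul_comm _ _).trans_le hmar
    refine h1.trans ?_
    rw [div_le_iff₀ hM, hMdef]
    rw [mul_div_cancel₀ _ hε'.ne']
    linarith
  have hBbound : (π B).toReal ≤ ε' := by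
    have hmar := mul_meas_ge_le_integral_of_nonneg
      (ae_of_all _ hrnonneg) hrInt δ
    have h1 : δ * (π B).toReal < δ * ε' := lt_of_le_of_lt hmar hIrlt
    exact le_of_lt ((mul_lt_mul_iff_right₀ hδpos).mp h1)
  have hbadmeas : MeasurableSet (A ∪ B) := hAmeas.union hBmeas
  have hbad : (π (A ∪ B)).toReal ≤ ε' + ε' := by
    have h1 : π (A ∪ B) ≤ π A + π B := measure_union_le A B
    have h2 := ENNReal.toReal_mono
      (by exact ENNReal.add_ne_top.mpr ⟨measure_ne_top π A, measure_ne_top π B⟩) h1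
    rw [ENNReal.toReal_add (measure_ne_top π A) (measure_ne_top π B)] at h2
    linarith
  have hpt : ∀ z, |f (Sn z) - f (h z)| ≤
      ε' + (2*C) * (A ∪ B).indicator (fun _ => (1:ℝ)) z := by
    intro z
    by_cases hz : z ∈ A ∪ B
    · rw [Set.indicator_of_mem hz]
      calc |f (Sn z) - f (h z)| = ‖f (Sn z) - f (h z)‖ := (Real.norm_eq_abs _).symm
        _ ≤ ‖f (Sn z)‖ + ‖f (h z)‖ := norm_sub_le _ _
        _ ≤ C + C := add_le_add (f.norm_coe_le_norm _) (f.norm_coe_le_norm _)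
        _ ≤ ε' + 2*C*1 := by linarith
    · rw [Set.indicator_of_notMem hz, mul_zero]
      rw [Set.mem_union] at hz
      push_neg at hz
      obtain ⟨hz1, hz2⟩ := hz
      have hhz : h z < M := lt_of_not_ge hz1
      have hrz : r z < δ := lt_of_not_ge hz2
      have hmem1 : h z ∈ Set.Icc (0:ℝ) (M+1) := ⟨sq_nonneg _, by linarith⟩
      have hmem2 : Sn z ∈ Set.Icc (0:ℝ) (M+1) := by
        rw [hdecomp z]
        exact ⟨add_nonneg (sq_nonneg _) (hrnonneg z), by linarith [hrnonneg z]⟩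
      have hdist : dist (Sn z) (h z) < δ₀ := by
        rw [Real.dist_eq, hdecomp z, add_sub_cancel_left, abs_of_nonneg (hrnonneg z)]
        linarith
      have := hδK _ hmem2 _ hmem1 hdist
      rw [Real.dist_eq] at this
      linarith
  have hint1 : Integrable (fun z => f (Sn z)) π := by
    refine Integrable.mono' (integrable_const C)
      ((f.continuous.measurable.comp (hSmeas n)).aestronglyMeasurable)
      (ae_of_all _ fun z => f.norm_coe_le_norm _)
  have hint2 : Integrable (fun z => f (h z)) π := by
    refine Integrable.mono' (integrable_const C)
      ((f.continuous.measurable.comp hhmeas).aestronglyMeasurable)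
      (ae_of_all _ fun z => f.norm_coe_le_norm _)
  have hint3 : Integrable
      (fun z => ε' + (2*C) * (A ∪ B).indicator (fun _ => (1:ℝ)) z) π :=
    (integrable_const ε').add
      (((integrable_const (1:ℝ)).indicator hbadmeas).const_mul (2*C))
  have hLrw : ∫ x, f x ∂chiSqOne = ∫ z, f (h z) ∂π := by
    have hmapsq : Measure.map h π = chiSqOne := by
      have hcomp : h = (fun x : ℝ => x ^ 2) ∘ (fun z : Fin (n+2) → ℝ => z 0) := rfl
      rw [hcomp, ← Measure.map_map hsq_meas (measurable_pi_apply 0), hmapeval 0]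
      rfl
    rw [← hmapsq, integral_map hhmeas.aemeasurable
      f.continuous.measurable.aestronglyMeasurable]
  show dist (∫ z, f (Sn z) ∂π) (∫ x, f x ∂chiSqOne) < ε
  rw [hLrw, Real.dist_eq, ← integral_sub hint1 hint2]
  calc |∫ z, (f (Sn z) - f (h z)) ∂π|
      ≤ ∫ z, |f (Sn z) - f (h z)| ∂π := by
        simpa [Real.norm_eq_abs] using
          norm_integral_le_integral_norm (fun z => f (Sn z) - f (h z)) (μ := π)
    _ ≤ ∫ z, (ε' + (2*C) * (A ∪ B).indicator (fun _ => (1:ℝ)) z) ∂π :=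
        integral_mono (hint1.sub hint2).abs hint3 hpt
    _ = ε' + (2*C) * (π (A ∪ B)).toReal := by
        rw [integral_add (integrable_const ε')
          (((integrable_const (1:ℝ)).indicator hbadmeas).const_mul (2*C)),
          integral_const, integral_const_mul, integral_indicator_const (1:ℝ) hbadmeas]
        simp [measure_univ, measureReal_def]
    _ ≤ ε' + (2*C) * (ε' + ε') := by
        have := mul_le_mul_of_nonneg_left hbad (by positivity : (0:ℝ) ≤ 2*C)
        linarith
    _ < ε := by
        have hfin : ε' * (4*(C+1)) = ε := by
          rw [hε'def]; field_simp
        nlinarith [hε', hCnn]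


end
end
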